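/- Let γ > 1, p̄ > 0, ρ̄ > 0, ū ∈ ℝ, c̄ = √(γp̄/ρ̄) and μ² = (γ−1)/(γ+1). With φ and ψ the piecewise rarefaction/shock functions of the 3-Lax curve, the total enthalpy along the 3-Lax curve, h(σ) = γσ/((γ−1)φ(σ)) + (ū + ψ(σ))²/2, is differentiable at σ = p̄ with h'(p̄) = (ū + c̄)/(c̄ρ̄). -/

import Mathlib

/-- The total enthalpy h(σ) = γσ/((γ−1)φ(σ)) + (ū + ψ(σ))²/2 along
the 3-Lax curve of the polytropic Euler equations is differentiable at σ = p̄
with derivative (ū + c̄)/(c̄ρ̄). -/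
theorem enthalpy_deriv_along_lax3
    (γ pbar ρbar ubar c μsq : ℝ) (hγ : 1 < γ) (hpbar : 0 < pbar) (hρbar : 0 < ρbar)
    (hc : c = Real.sqrt (γ * pbar / ρbar)) (hμ : μsq = (γ - 1) / (γ + 1))
    (φ ψ : ℝ → ℝ)
    (hφ : ∀ σ : ℝ, φ σ =
      if σ ≤ pbar then ρbar * (σ / pbar) ^ (1 / γ)
      else ρbar * (σ + μsq * pbar) / (μsq * σ + pbar))
    (hψ : ∀ σ : ℝ, ψ σ =
      if σ ≤ pbar then (2 * c / (γ - 1)) * ((σ / pbar) ^ ((γ - 1) / (2 * γ)) - 1)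
      else (σ - pbar) * Real.sqrt ((1 - μsq) / (ρbar * (σ + μsq * pbar)))) :
    HasDerivAt (fun σ => γ * σ / ((γ - 1) * φ σ) + (ubar + ψ σ) ^ 2 / 2)
      ((ubar + c) / (c * ρbar)) pbar := by
  have hγ0 : (0:ℝ) < γ := by linarith
  have hγ1 : (0:ℝ) < γ - 1 := by linarith
  have hγp : (0:ℝ) < γ + 1 := by linarith
  have hμpos : 0 < μsq := by rw [hμ]; positivity
  have hμlt : μsq < 1 := by rw [hμ, div_lt_one hγp]; linarith
  have hcpos : 0 < c := by rw [hc]; positivity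
  have hc2 : c ^ 2 = γ * pbar / ρbar := by rw [hc, Real.sq_sqrt (by positivity)]
  have hgp : γ * pbar = c ^ 2 * ρbar := by rw [hc2]; field_simp
  have hμ2 : μsq * (γ + 1) = γ - 1 := by rw [hμ]; field_simp
  have hxp : pbar / pbar = 1 := div_self hpbar.ne'
  have hx : HasDerivAt (fun σ : ℝ => σ / pbar) (1 / pbar) pbar := by
    simpa using (hasDerivAt_id pbar).div_const pbar
  -- ### left branch
  have hA : HasDerivAt (fun σ : ℝ => (σ / pbar) ^ (1/γ))
      (1/pbar * (1/γ) * (pbar/pbar) ^ (1/γ - 1)) pbar :=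
    hx.rpow_const (Or.inl (by rw [hxp]; norm_num))
  have hDenL : HasDerivAt (fun σ : ℝ => (γ - 1) * (ρbar * (σ / pbar) ^ (1/γ)))
      ((γ - 1) * (ρbar * (1/pbar * (1/γ) * (pbar/pbar) ^ (1/γ - 1)))) pbar :=
    (hA.const_mul ρbar).const_mul (γ - 1)
  have hdenneL : (γ - 1) * (ρbar * (pbar / pbar) ^ (1/γ)) ≠ 0 := by
    rw [hxp, Real.one_rpow]; positivity
  have hterm1L := ((hasDerivAt_id pbar).const_mul γ).div hDenL hdenneL
  have hB : HasDerivAt (fun σ : ℝ => (σ / pbar) ^ ((γ - 1) / (2 * γ)))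
      (1/pbar * ((γ - 1) / (2 * γ)) * (pbar/pbar) ^ ((γ - 1) / (2 * γ) - 1)) pbar :=
    hx.rpow_const (Or.inl (by rw [hxp]; norm_num))
  have hψL := (hB.sub_const 1).const_mul (2 * c / (γ - 1))
  have hsqL := ((hψL.const_add ubar).pow 2).div_const 2
  have hLder := hterm1L.add hsqL
  have hLd : HasDerivAt (fun σ : ℝ => γ * σ / ((γ - 1) * (ρbar * (σ / pbar) ^ (1/γ)))
      + (ubar + (2 * c / (γ - 1)) * ((σ / pbar) ^ ((γ - 1) / (2 * γ)) - 1)) ^ 2 / 2)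
      ((ubar + c) / (c * ρbar)) pbar := by
    refine hLder.congr_deriv ?_
    symm
    simp only [id_eq]
    rw [hxp]
    simp only [Real.one_rpow]
    norm_num
    field_simp
    linear_combination ubar * hgp
  -- ### right branch
  have hpm : (0:ℝ) < pbar + μsq * pbar := by positivity
  have hq := (((hasDerivAt_id pbar).add_const (μsq * pbar)).const_mul ρbar).div
      (((hasDerivAt_id pbar).const_mul μsq).add_const pbar)
      (show μsq * pbar + pbar ≠ 0 by positivity)
  have hDenR := hq.const_mul (γ - 1)
  have hdenneR : (γ - 1) * (ρbar * (pbar + μsq * pbar) / (μsq * pbar + pbar)) ≠ 0 := by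
    positivity
  have hterm1R := ((hasDerivAt_id pbar).const_mul γ).div hDenR hdenneR
  have hwne : (1 - μsq) / (ρbar * (pbar + μsq * pbar)) ≠ 0 := by
    have h1 : (0:ℝ) < 1 - μsq := by linarith
    positivity
  have hw := (hasDerivAt_const pbar (1 - μsq)).div
      (((hasDerivAt_id pbar).add_const (μsq * pbar)).const_mul ρbar)
      (show ρbar * (pbar + μsq * pbar) ≠ 0 by positivity)
  have hg := hw.sqrt hwne
  have hψR := ((hasDerivAt_id pbar).sub_const pbar).mul hg
  have hsqR := ((hψR.const_add ubar).pow 2).div_const 2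
  have hRder := hterm1R.add hsqR
  have hsqrtval : Real.sqrt ((1 - μsq) / (ρbar * (pbar + μsq * pbar))) = 1 / (c * ρbar) := by
    have harg : (1 - μsq) / (ρbar * (pbar + μsq * pbar)) = (1 / (c * ρbar)) ^ 2 := by
      rw [hμ, div_pow, one_pow, mul_pow, hc2]
      field_simp
      ring
    rw [harg, Real.sqrt_sq (by positivity)]
  have hRd : HasDerivAt (fun σ : ℝ => γ * σ / ((γ - 1) * (ρbar * (σ + μsq * pbar) / (μsq * σ + pbar)))
      + (ubar + (σ - pbar) * Real.sqrt ((1 - μsq) / (ρbar * (σ + μsq * pbar)))) ^ 2 / 2)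
      ((ubar + c) / (c * ρbar)) pbar := by
    refine hRder.congr_deriv ?_
    symm
    simp only [id_eq, Pi.div_apply, Pi.mul_apply]
    rw [hsqrtval]
    norm_num
    field_simp
    linear_combination (-c*(1+μsq)) * hμ2
  -- ### glue
  have hval : ∀ x ∈ Set.Iic pbar,
      γ * x / ((γ - 1) * φ x) + (ubar + ψ x) ^ 2 / 2
        = γ * x / ((γ - 1) * (ρbar * (x / pbar) ^ (1/γ)))
          + (ubar + (2 * c / (γ - 1)) * ((x / pbar) ^ ((γ - 1) / (2 * γ)) - 1)) ^ 2 / 2 := by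
    intro x hx'
    have hxle : x ≤ pbar := hx'
    rw [hφ, hψ, if_pos hxle, if_pos hxle]
  have hleft : HasDerivWithinAt (fun σ => γ * σ / ((γ - 1) * φ σ) + (ubar + ψ σ) ^ 2 / 2)
      ((ubar + c) / (c * ρbar)) (Set.Iic pbar) pbar :=
    (hLd.hasDerivWithinAt).congr hval (hval pbar (Set.mem_Iic.mpr le_rfl))
  have hvalR : ∀ x ∈ Set.Ici pbar,
      γ * x / ((γ - 1) * φ x) + (ubar + ψ x) ^ 2 / 2
        = γ * x / ((γ - 1) * (ρbar * (x + μsq * pbar) / (μsq * x + pbar)))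
          + (ubar + (x - pbar) * Real.sqrt ((1 - μsq) / (ρbar * (x + μsq * pbar)))) ^ 2 / 2 := by
    intro x hx'
    rcases eq_or_lt_of_le (Set.mem_Ici.mp hx') with h | h
    · subst h
      rw [hφ, hψ, if_pos le_rfl, if_pos le_rfl, hxp, Real.one_rpow, Real.one_rpow]
      have h1 : ρbar * (pbar + μsq * pbar) / (μsq * pbar + pbar) = ρbar := by
        rw [show pbar + μsq * pbar = μsq * pbar + pbar by ring]
        field_simp
      rw [h1]
      simp
    · rw [hφ, hψ, if_neg (not_le.mpr h), if_neg (not_le.mpr h)]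
  have hright : HasDerivWithinAt (fun σ => γ * σ / ((γ - 1) * φ σ) + (ubar + ψ σ) ^ 2 / 2)
      ((ubar + c) / (c * ρbar)) (Set.Ici pbar) pbar :=
    (hRd.hasDerivWithinAt).congr hvalR (hvalR pbar (Set.mem_Ici.mpr le_rfl))
  have hfin := hleft.union hright
  rw [Set.Iic_union_Ici, hasDerivWithinAt_univ] at hfin
  exact hfin
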